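/- Let C, C' be τ-complexes over F₂ and z ∈ C, z' ∈ C' τ-invariant cycles. Suppose there are elements x, y ∈ C and x', y' ∈ C' such that (z, 0) is homologous to (x, y) in C_τ = Cone(1+τ) and (0, z') is homologous to (x', y') in C'_τ. Then in C⊗_τ = Cone(1⊗1+τ⊗τ), the cycle (0, z⊗z') is homologous to (x⊗x', y⊗x' + τx⊗y'). -/

import Mathlib

open TensorProduct

/- Ungraded model of chain complexes over F₂ = ZMod 2: a module with a
differential `d` (`d ∘ d = 0`) and a chain involution `τ`.
`coneD d τ` is the differential `[[d,0],[1+τ,d]]` of `Cone(1+τ)` on `C ⊕ C[1]`;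
elements of the cone are pairs. -/

def coneD {R C : Type*} [CommRing R] [AddCommGroup C] [Module R C]
    (d τ : C →ₗ[R] C) : C × C →ₗ[R] C × C :=
  LinearMap.prod (d ∘ₗ LinearMap.fst R C C)
    ((LinearMap.id + τ) ∘ₗ LinearMap.fst R C C + d ∘ₗ LinearMap.snd R C C)

lemma char2_add_self' {M : Type*} [AddCommGroup M] [Module (ZMod 2) M] (v : M) :
    v + v = 0 := by
  have h : ((1 : ZMod 2) + 1) = 0 := by decide
  calc v + v = ((1 : ZMod 2) + 1) • v := by rw [add_smul, one_smul]
    _ = 0 := by rw [h, zero_smul]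

lemma char2_neg_eq' {M : Type*} [AddCommGroup M] [Module (ZMod 2) M] (v : M) :
    -v = v := neg_eq_of_add_eq_zero_left (char2_add_self' v)

lemma char2_three_nsmul' {M : Type*} [AddCommGroup M] [Module (ZMod 2) M] (v : M) :
    (3 : ℕ) • v = v := by
  have h3 : (3 : ℕ) = 2 + 1 := rfl
  rw [h3, add_nsmul, two_smul, one_nsmul, char2_add_self', zero_add]

lemma char2_two_zsmul' {M : Type*} [AddCommGroup M] [Module (ZMod 2) M] (v : M) :
    (2 : ℤ) • v = 0 := by rw [two_smul]; exact char2_add_self' v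

lemma char2_three_zsmul' {M : Type*} [AddCommGroup M] [Module (ZMod 2) M] (v : M) :
    (3 : ℤ) • v = v := by
  have h3 : (3 : ℤ) = 2 + 1 := rfl
  rw [h3, add_smul, one_smul, char2_two_zsmul', zero_add]

lemma char2_two_nsmul' {M : Type*} [AddCommGroup M] [Module (ZMod 2) M] (v : M) :
    (2 : ℕ) • v = 0 := by rw [two_smul]; exact char2_add_self' v

/-- if `z, z'` are τ-invariant cycles and `(z,0) ∼ (x,y)` in
`C_τ`, `(0,z') ∼ (x',y')` in `C'_τ`, then in `C⊗_τ = Cone(1⊗1 + τ⊗τ)` one has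
`(0, z⊗z') ∼ (x⊗x', y⊗x' + τx⊗y')`. -/
theorem tensor_cone_homologous_two
    {C C' : Type*} [AddCommGroup C] [Module (ZMod 2) C]
    [AddCommGroup C'] [Module (ZMod 2) C']
    (d τ : C →ₗ[ZMod 2] C) (d' τ' : C' →ₗ[ZMod 2] C')
    (hdd : d ∘ₗ d = 0) (hdd' : d' ∘ₗ d' = 0)
    (hτ : τ ∘ₗ τ = LinearMap.id) (hτ' : τ' ∘ₗ τ' = LinearMap.id)
    (hdτ : d ∘ₗ τ = τ ∘ₗ d) (hdτ' : d' ∘ₗ τ' = τ' ∘ₗ d')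
    (z : C) (hz : d z = 0) (hzτ : τ z = z)
    (z' : C') (hz' : d' z' = 0) (hz'τ : τ' z' = z')
    (x y : C) (x' y' : C')
    (hxy : ∃ p : C × C, ((z, 0) : C × C) - (x, y) = coneD d τ p)
    (hxy' : ∃ p' : C' × C', ((0, z') : C' × C') - (x', y') = coneD d' τ' p') :
    ∃ q : (C ⊗[ZMod 2] C') × (C ⊗[ZMod 2] C'),
      (((0 : C ⊗[ZMod 2] C'), z ⊗ₜ[ZMod 2] z')
          : (C ⊗[ZMod 2] C') × (C ⊗[ZMod 2] C'))
        - (x ⊗ₜ[ZMod 2] x', y ⊗ₜ[ZMod 2] x' + (τ x) ⊗ₜ[ZMod 2] y')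
        = coneD
            (TensorProduct.map d LinearMap.id + TensorProduct.map LinearMap.id d')
            (TensorProduct.map τ τ') q := by
  
  obtain ⟨⟨a, b⟩, hab⟩ := hxy
  obtain ⟨⟨a', b'⟩, hab'⟩ := hxy'
  simp only [coneD, LinearMap.prod_apply, LinearMap.coe_comp, Function.comp_apply,
    LinearMap.fst_apply, LinearMap.snd_apply, LinearMap.add_apply, LinearMap.id_apply,
    Prod.mk_sub_mk, Prod.mk.injEq, Function.prod] at hab hab'
  obtain ⟨h1, h2⟩ := hab
  obtain ⟨h1', h2'⟩ := hab'
  have pdd : ∀ v, d (d v) = 0 := fun v => LinearMap.ext_iff.mp hdd v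
  have pdd' : ∀ v, d' (d' v) = 0 := fun v => LinearMap.ext_iff.mp hdd' v
  have pττ : ∀ v, τ (τ v) = v := fun v => LinearMap.ext_iff.mp hτ v
  have pττ' : ∀ v, τ' (τ' v) = v := fun v => LinearMap.ext_iff.mp hτ' v
  have pdτ : ∀ v, d (τ v) = τ (d v) := fun v => LinearMap.ext_iff.mp hdτ v
  have pdτ' : ∀ v, d' (τ' v) = τ' (d' v) := fun v => LinearMap.ext_iff.mp hdτ' v
  rw [zero_sub] at h2 h1'
  have hy : y = a + τ a + d b := (char2_neg_eq' y).symm.trans h2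
  have hx' : x' = d' a' := (char2_neg_eq' x').symm.trans h1'
  have hx : x = z + d a := by
    rw [← h1, sub_eq_add_neg, char2_neg_eq', ← add_assoc, char2_add_self', zero_add]
  have hy' : y' = z' + (a' + τ' a' + d' b') := by
    rw [← h2', sub_eq_add_neg, char2_neg_eq', ← add_assoc, char2_add_self', zero_add]
  subst hx hy hx' hy'
  refine ⟨((z + d a) ⊗ₜ a',
    (z + d a) ⊗ₜ b' + τ a ⊗ₜ (z' + (a' + τ' a' + d' b')) + a ⊗ₜ a'
      + τ a ⊗ₜ τ' a' + d a ⊗ₜ b' + b ⊗ₜ d' a'), ?_⟩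
  simp only [coneD, LinearMap.prod_apply, LinearMap.coe_comp, Function.comp_apply,
    LinearMap.fst_apply, LinearMap.snd_apply, LinearMap.add_apply, LinearMap.id_apply,
    Prod.mk_sub_mk, Prod.mk_add_mk, Prod.mk.injEq, Function.prod, map_add, TensorProduct.map_tmul,
    tmul_add, add_tmul, hz, hz', hzτ, hz'τ, pdd, pdd', pττ, pττ', pdτ, pdτ',
    zero_tmul, tmul_zero, sub_eq_add_neg, char2_neg_eq', LinearMap.map_zero,
    add_zero, zero_add]
  constructor
  · trivial
  · abel_nf; try simp [char2_two_nsmul', char2_three_nsmul', char2_two_zsmul', char2_three_zsmul']
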